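/- Let n be a positive integer and p, q ∈ (0,1]. Let N, V₁, V₂, … be mutually independent random variables, where N has the Binomial(n, p) distribution and each Vᵢ has the geometric distribution on the positive integers with parameter q, and set S := ∑_{i=1}^{N} Vᵢ (with S := 0 on {N = 0}). Then for every real θ ≥ 0: (i) if θ ≤ np/q then ℙ(S ≤ θ) ≤ exp(−(√(np) − √(θq))²); and (ii) if θ ≥ np/q then ℙ(S ≥ θ) ≤ exp(−(√(θq) − √(np))²). -/

import Mathlib

open MeasureTheory ProbabilityTheory

open Real
open MeasureTheory ProbabilityTheory
open scoped ENNReal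

lemma keyR (n : ℕ) (hn : 0 < n) (p q θ : ℝ) (hp1 : 0 < p) (hp2 : p ≤ 1) (hq1 : 0 < q)
    (hq2 : q ≤ 1) (hθ : 0 < θ) :
    ∃ u : ℝ, 0 < u ∧ (1 - q) * u < 1 ∧
      (n * p / q ≤ θ → 1 ≤ u) ∧ (θ ≤ n * p / q → u ≤ 1) ∧
      (1 - p + p * (q * u / (1 - (1 - q) * u))) ^ n / u ^ θ
        ≤ Real.exp (-(Real.sqrt (θ * q) - Real.sqrt (n * p)) ^ 2) := by
  have ha : (0:ℝ) < n * p := by positivity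
  have hb : (0:ℝ) < θ * q := by positivity
  set a : ℝ := n * p with ha'
  set b : ℝ := θ * q with hb'
  have hsa : Real.sqrt a * Real.sqrt a = a := Real.mul_self_sqrt ha.le
  have hsb : Real.sqrt b * Real.sqrt b = b := Real.mul_self_sqrt hb.le
  have hsa0 : 0 < Real.sqrt a := Real.sqrt_pos.2 ha
  have hsb0 : 0 < Real.sqrt b := Real.sqrt_pos.2 hb
  set c : ℝ := Real.sqrt a / Real.sqrt b with hc'
  have hc : 0 < c := by positivity
  set d : ℝ := 1 - q + c * q with hd'
  have hd : 0 < d := by nlinarith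
  have hdinv : 0 < d⁻¹ := by positivity
  refine ⟨d⁻¹, hdinv, ?_, ?_, ?_, ?_⟩
  · rw [mul_inv_lt_iff₀ hd, one_mul]; nlinarith
  · intro h
    have hab : a ≤ b := by
      have := (div_le_iff₀ hq1).mp h
      rw [ha', hb']; linarith
    have hc1 : c ≤ 1 := by
      rw [hc', div_le_one hsb0]
      exact Real.sqrt_le_sqrt hab
    have hd1 : d ≤ 1 := by nlinarith
    nlinarith [mul_inv_cancel₀ hd.ne']
  · intro h
    have hab : b ≤ a := by
      have := (le_div_iff₀ hq1).mp h
      rw [ha', hb']; linarith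
    have hc1 : 1 ≤ c := by
      rw [hc', le_div_iff₀ hsb0, one_mul]
      exact Real.sqrt_le_sqrt hab
    have hd1 : 1 ≤ d := by nlinarith
    nlinarith [mul_inv_cancel₀ hd.ne']
  · have h1 : 1 - (1 - q) * d⁻¹ = c * q * d⁻¹ := by
      field_simp
      rw [hd']; ring
    have hm : q * d⁻¹ / (1 - (1 - q) * d⁻¹) = c⁻¹ := by
      rw [h1]
      field_simp
      try ring
    rw [hm]
    have hbase0 : 0 ≤ 1 - p + p * c⁻¹ := by
      have : 0 < p * c⁻¹ := by positivity
      linarith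
    have hbase : 1 - p + p * c⁻¹ ≤ Real.exp (p * (c⁻¹ - 1)) := by
      have := Real.add_one_le_exp (p * (c⁻¹ - 1))
      linarith
    have hpow1 : (1 - p + p * c⁻¹) ^ n ≤ Real.exp ((n : ℝ) * (p * (c⁻¹ - 1))) := by
      rw [Real.exp_nat_mul]
      exact pow_le_pow_left₀ hbase0 hbase n
    have hdle : d ≤ Real.exp (q * (c - 1)) := by
      have := Real.add_one_le_exp (q * (c - 1))
      rw [hd']; linarith
    have hpow2 : d ^ θ ≤ Real.exp (q * (c - 1) * θ) := by
      calc d ^ θ ≤ (Real.exp (q * (c - 1))) ^ θ :=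
            Real.rpow_le_rpow hd.le hdle hθ.le
        _ = Real.exp (q * (c - 1) * θ) := (Real.exp_mul _ _).symm
    have hrw : (1 - p + p * c⁻¹) ^ n / (d⁻¹) ^ θ = (1 - p + p * c⁻¹) ^ n * d ^ θ := by
      rw [Real.inv_rpow hd.le, div_eq_mul_inv, inv_inv]
    rw [hrw]
    have hmul : (1 - p + p * c⁻¹) ^ n * d ^ θ
        ≤ Real.exp ((n : ℝ) * (p * (c⁻¹ - 1))) * Real.exp (q * (c - 1) * θ) := by
      exact mul_le_mul hpow1 hpow2 (Real.rpow_nonneg hd.le θ) (Real.exp_pos _).le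
    refine hmul.trans ?_
    rw [← Real.exp_add, Real.exp_le_exp]
    have e1 : a * c⁻¹ = Real.sqrt a * Real.sqrt b := by
      rw [hc', inv_div, mul_div_assoc', div_eq_iff hsa0.ne']
      linear_combination -(Real.sqrt b * hsa)
    have e2 : b * c = Real.sqrt a * Real.sqrt b := by
      rw [hc', mul_div_assoc', div_eq_iff hsb0.ne']
      linear_combination -(Real.sqrt a * hsb)
    have key : a * (c⁻¹ - 1) + b * (c - 1) = -(Real.sqrt b - Real.sqrt a) ^ 2 := by
      have expand : -(Real.sqrt b - Real.sqrt a) ^ 2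
          = 2 * (Real.sqrt a * Real.sqrt b) - a - b := by
        linear_combination -hsa - hsb
      rw [expand]
      linear_combination e1 + e2
    calc (n : ℝ) * (p * (c⁻¹ - 1)) + q * (c - 1) * θ
        = a * (c⁻¹ - 1) + b * (c - 1) := by rw [ha', hb']; ring
      _ = -(Real.sqrt b - Real.sqrt a) ^ 2 := key
      _ ≤ _ := le_refl _

open MeasureTheory ProbabilityTheory
open scoped ENNReal

lemma lint_comp {Ω : Type*} [MeasureSpace Ω] (X : Ω → ℕ) (hX : Measurable X) (g : ℕ → ℝ≥0∞) :
    ∫⁻ ω, g (X ω) ∂ℙ = ∑' m, g m * ℙ {ω | X ω = m} := by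
  rw [← lintegral_map measurable_from_top hX, lintegral_countable' g]
  refine tsum_congr fun m => ?_
  rw [Measure.map_apply hX (measurableSet_singleton m)]
  rfl

lemma prod_fact {Ω : Type*} [MeasureSpace Ω] [IsProbabilityMeasure (ℙ : Measure Ω)]
    (W : Option ℕ → Ω → ℕ) (hW : ∀ o, Measurable (W o))
    (hIndep : iIndepFun W ℙ)
    (g : Option ℕ → ℕ → ℝ≥0∞) (s : Finset (Option ℕ)) :
    ∫⁻ ω, ∏ o ∈ s, g o (W o ω) ∂ℙ = ∏ o ∈ s, ∫⁻ ω, g o (W o ω) ∂ℙ := by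
  classical
  induction s using Finset.induction with
  | empty => simp
  | insert i s hi ih =>
    simp only [Finset.prod_insert hi]
    have hm1 : Measurable (fun ω => g i (W i ω)) := measurable_from_top.comp (hW i)
    have hm2 : Measurable (fun ω => ∏ o ∈ s, g o (W o ω)) :=
      Finset.measurable_prod s fun o _ => measurable_from_top.comp (hW o)
    have hInd : IndepFun (fun ω => g i (W i ω)) (fun ω => ∏ o ∈ s, g o (W o ω)) ℙ := by
      have base := hIndep.indepFun_finset {i} s (Finset.disjoint_singleton_left.mpr hi) hW
      have hφ : Measurable (fun v : (({i} : Finset (Option ℕ)) : Type) → ℕ =>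
          g i (v ⟨i, Finset.mem_singleton_self i⟩)) :=
        measurable_from_top.comp (measurable_pi_apply _)
      have hψ : Measurable (fun v : ((s : Finset (Option ℕ)) : Type) → ℕ =>
          ∏ o ∈ s.attach, g o.1 (v o)) :=
        Finset.measurable_prod _ fun o _ => measurable_from_top.comp (measurable_pi_apply o)
      have := base.comp hφ hψ
      convert this using 1
      funext a
      simp only [Function.comp]
      funext a
      simp only [Function.comp]
      rw [← Finset.prod_attach s (fun o => g o (W o a))]
    have key := lintegral_mul_eq_lintegral_mul_lintegral_of_indepFun hm1 hm2 hInd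
    simp only [Pi.mul_apply] at key
    rw [key, ih]

lemma geo_sum (c0 r : ℝ) (hc : 0 ≤ c0) (hr0 : 0 ≤ r) (hr1 : r < 1) :
    ∑' m : ℕ, ENNReal.ofReal (c0 * r ^ m) = ENNReal.ofReal (c0 * (1 - r)⁻¹) := by
  rw [← ENNReal.ofReal_tsum_of_nonneg (fun m => by positivity)
    ((summable_geometric_of_lt_one hr0 hr1).mul_left c0), tsum_mul_left,
    tsum_geometric_of_lt_one hr0 hr1]

lemma geom_tail {Ω : Type*} [MeasureSpace Ω] [IsProbabilityMeasure (ℙ : Measure Ω)]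
    (q : ℝ) (hq1 : 0 < q) (hq2 : q ≤ 1) (X : Ω → ℕ) (hX : Measurable X)
    (hV : ∀ m : ℕ, 1 ≤ m → ℙ {ω | X ω = m} = ENNReal.ofReal (q * (1 - q) ^ (m - 1))) :
    ℙ {ω | X ω = 0} = 0 := by
  have hmeas : ∀ m : ℕ, MeasurableSet {ω | X ω = m} := fun m => hX (measurableSet_singleton m)
  have hdisj : Pairwise (Function.onFun Disjoint fun m : ℕ => {ω | X ω = m}) := by
    intro m k hmk
    simp only [Function.onFun, Set.disjoint_left]
    rintro ω h1 h2
    exact hmk ((h1 : X ω = m).symm.trans h2)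
  have h1 : ∑' m : ℕ, ℙ {ω | X ω = m} = 1 := by
    rw [← measure_iUnion hdisj hmeas]
    have hU : (⋃ m : ℕ, {ω | X ω = m}) = Set.univ := by ext ω; simp
    rw [hU, measure_univ]
  rw [tsum_eq_zero_add' ENNReal.summable] at h1
  have htail : ∑' m : ℕ, ℙ {ω | X ω = m + 1} = 1 := by
    have hterm : ∀ m : ℕ, ℙ {ω | X ω = m + 1} = ENNReal.ofReal (q * (1 - q) ^ m) := by
      intro m
      rw [hV (m + 1) (Nat.le_add_left 1 m)]
      simp
    simp_rw [hterm]
    rw [geo_sum q (1 - q) hq1.le (by linarith) (by linarith)]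
    have : (1 : ℝ) - (1 - q) = q := by ring
    rw [this, mul_inv_cancel₀ hq1.ne', ENNReal.ofReal_one]
  rw [htail] at h1
  calc ℙ {ω | X ω = 0} = ℙ {ω | X ω = 0} + 1 - 1 :=
        (ENNReal.add_sub_cancel_right ENNReal.one_ne_top).symm
    _ = 1 - 1 := by rw [h1]
    _ = 0 := by simp

lemma geom_mgf {Ω : Type*} [MeasureSpace Ω] [IsProbabilityMeasure (ℙ : Measure Ω)]
    (q : ℝ) (hq1 : 0 < q) (hq2 : q ≤ 1) (X : Ω → ℕ) (hX : Measurable X)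
    (hV : ∀ m : ℕ, 1 ≤ m → ℙ {ω | X ω = m} = ENNReal.ofReal (q * (1 - q) ^ (m - 1)))
    (u : ℝ) (hu0 : 0 < u) (hu1 : (1 - q) * u < 1) :
    ∫⁻ ω, (ENNReal.ofReal u) ^ (X ω) ∂ℙ = ENNReal.ofReal (q * u / (1 - (1 - q) * u)) := by
  rw [lint_comp X hX, tsum_eq_zero_add' ENNReal.summable, pow_zero, one_mul,
    geom_tail q hq1 hq2 X hX hV]
  have hterm : ∀ m : ℕ, (ENNReal.ofReal u) ^ (m + 1) * ℙ {ω | X ω = m + 1}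
      = ENNReal.ofReal ((q * u) * ((1 - q) * u) ^ m) := by
    intro m
    rw [hV (m + 1) (Nat.le_add_left 1 m), Nat.add_sub_cancel,
      ← ENNReal.ofReal_pow hu0.le, ← ENNReal.ofReal_mul (by positivity)]
    congr 1
    rw [mul_pow, pow_succ]
    ring
  simp_rw [hterm]
  rw [geo_sum (q * u) ((1 - q) * u) (by positivity) (by nlinarith) hu1, zero_add,
    div_eq_mul_inv]

noncomputable def gfun (c : ℝ≥0∞) (k : ℕ) : Option ℕ → ℕ → ℝ≥0∞
  | none => fun m => if m = k then 1 else 0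
  | some _ => fun m => c ^ m

lemma mainInt {Ω : Type*} [MeasureSpace Ω] [IsProbabilityMeasure (ℙ : Measure Ω)]
    (n : ℕ) (p q : ℝ) (hp1 : 0 < p) (hp2 : p ≤ 1) (hq1 : 0 < q) (hq2 : q ≤ 1)
    (N : Ω → ℕ) (V : ℕ → Ω → ℕ)
    (hNmeas : Measurable N) (hVmeas : ∀ i, Measurable (V i))
    (hIndep : iIndepFun (fun o : Option ℕ => o.elim N V) ℙ)
    (hN : ∀ m : ℕ, ℙ {ω | N ω = m}
      = ENNReal.ofReal ((n.choose m : ℝ) * p ^ m * (1 - p) ^ (n - m)))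
    (hV : ∀ i, ∀ m : ℕ, 1 ≤ m →
      ℙ {ω | V i ω = m} = ENNReal.ofReal (q * (1 - q) ^ (m - 1)))
    (S : Ω → ℕ) (hS : ∀ ω, S ω = ∑ i ∈ Finset.range (N ω), V i ω)
    (u : ℝ) (hu0 : 0 < u) (hu1 : (1 - q) * u < 1) :
    ∫⁻ ω, (ENNReal.ofReal u) ^ (S ω) ∂ℙ
      = ENNReal.ofReal ((1 - p + p * (q * u / (1 - (1 - q) * u))) ^ n) := by
  classical
  set c : ℝ≥0∞ := ENNReal.ofReal u with hc'
  set W : Option ℕ → Ω → ℕ := fun o => o.elim N V with hW'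
  have hWmeas : ∀ o, Measurable (W o) := by rintro (_ | i); exacts [hNmeas, hVmeas i]
  set mr : ℝ := q * u / (1 - (1 - q) * u) with hmr'
  have hden : 0 < 1 - (1 - q) * u := by linarith
  have hmr0 : 0 ≤ mr := by positivity
  set F : ℕ → Ω → ℝ≥0∞ :=
    fun k ω => ∏ o ∈ insert none ((Finset.range k).image some), gfun c k o (W o ω) with hF'
  have hnone : ∀ k : ℕ, (none : Option ℕ) ∉ (Finset.range k).image some := by
    intro k h
    obtain ⟨i, _, hi⟩ := Finset.mem_image.mp h
    cases hi
  have hinj : ∀ k : ℕ, Set.InjOn some ((Finset.range k) : Set ℕ) :=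
    fun k a _ b _ h => Option.some_injective _ h
  have hFeq : ∀ k ω, F k ω
      = (if N ω = k then 1 else 0) * ∏ i ∈ Finset.range k, c ^ (V i ω) := by
    intro k ω
    simp only [hF']
    rw [Finset.prod_insert (hnone k), Finset.prod_image (hinj k)]
    rfl
  have hpt : ∀ ω, c ^ (S ω) = ∑' k, F k ω := by
    intro ω
    rw [tsum_eq_single (N ω) (fun k hk => by rw [hFeq, if_neg fun h => hk h.symm, zero_mul]),
      hFeq, if_pos rfl, one_mul, Finset.prod_pow_eq_pow_sum, hS ω]
  have hFmeas : ∀ k, Measurable (F k) :=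
    fun k => Finset.measurable_prod _ fun o _ => measurable_from_top.comp (hWmeas o)
  calc ∫⁻ ω, c ^ (S ω) ∂ℙ = ∫⁻ ω, ∑' k, F k ω ∂ℙ := lintegral_congr hpt
    _ = ∑' k, ∫⁻ ω, F k ω ∂ℙ := lintegral_tsum fun k => (hFmeas k).aemeasurable
    _ = ∑' k, ℙ {ω | N ω = k} * (ENNReal.ofReal mr) ^ k := by
        refine tsum_congr fun k => ?_
        simp only [hF']
        rw [prod_fact W hWmeas hIndep (gfun c k) _, Finset.prod_insert (hnone k),
          Finset.prod_image (hinj k)]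
        have h1 : ∫⁻ ω, gfun c k none (W none ω) ∂ℙ = ℙ {ω | N ω = k} := by
          have := lint_comp N hNmeas (fun m => if m = k then (1 : ℝ≥0∞) else 0)
          rw [show (fun ω => gfun c k none (W none ω))
              = fun ω => (if N ω = k then (1 : ℝ≥0∞) else 0) from rfl, this,
            tsum_eq_single k (fun m hm => by rw [if_neg hm, zero_mul]), if_pos rfl, one_mul]
        have h2 : ∀ i : ℕ, ∫⁻ ω, gfun c k (some i) (W (some i) ω) ∂ℙ = ENNReal.ofReal mr := by
          intro i
          exact geom_mgf q hq1 hq2 (V i) (hVmeas i) (hV i) u hu0 hu1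
        rw [h1, Finset.prod_congr rfl (fun i _ => h2 i), Finset.prod_const, Finset.card_range]
    _ = ∑ k ∈ Finset.range (n + 1), ℙ {ω | N ω = k} * (ENNReal.ofReal mr) ^ k := by
        refine tsum_eq_sum fun k hk => ?_
        have hlt : n < k := by
          by_contra h
          exact hk (Finset.mem_range.mpr (Nat.lt_succ_of_le (not_lt.mp h)))
        rw [hN k, Nat.choose_eq_zero_of_lt hlt]
        simp
    _ = ENNReal.ofReal ((1 - p + p * mr) ^ n) := by
        have hterm : ∀ k ∈ Finset.range (n + 1), ℙ {ω | N ω = k} * (ENNReal.ofReal mr) ^ k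
            = ENNReal.ofReal ((n.choose k : ℝ) * p ^ k * (1 - p) ^ (n - k) * mr ^ k) := by
          intro k _
          rw [hN k, ← ENNReal.ofReal_pow hmr0, ← ENNReal.ofReal_mul
            (mul_nonneg (mul_nonneg (by positivity) (by positivity))
              (pow_nonneg (by linarith) _))]
        rw [Finset.sum_congr rfl hterm, ← ENNReal.ofReal_sum_of_nonneg (fun k _ =>
          mul_nonneg (mul_nonneg (mul_nonneg (by positivity) (by positivity))
            (pow_nonneg (by linarith) _)) (pow_nonneg hmr0 _))]
        congr 1
        calc ∑ k ∈ Finset.range (n + 1), (n.choose k : ℝ) * p ^ k * (1 - p) ^ (n - k) * mr ^ k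
            = ∑ k ∈ Finset.range (n + 1), (p * mr) ^ k * (1 - p) ^ (n - k) * (n.choose k : ℝ) :=
              Finset.sum_congr rfl fun k _ => by rw [mul_pow]; ring
          _ = (p * mr + (1 - p)) ^ n := (add_pow (p * mr) (1 - p) n).symm
          _ = (1 - p + p * mr) ^ n := by ring
open MeasureTheory ProbabilityTheory
open scoped ENNReal

section helper
variable {Ω : Type*} [MeasureSpace Ω]

lemma statement1_meas_S (N : Ω → ℕ) (V : ℕ → Ω → ℕ) (hNmeas : Measurable N)
    (hVmeas : ∀ i, Measurable (V i)) (S : Ω → ℕ)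
    (hS : ∀ ω, S ω = ∑ i ∈ Finset.range (N ω), V i ω) : Measurable S := by
  apply measurable_to_countable'
  intro s
  have hset : S ⁻¹' {s} = ⋃ k, {ω | N ω = k} ∩ {ω | ∑ i ∈ Finset.range k, V i ω = s} := by
    ext ω
    simp only [Set.mem_preimage, Set.mem_singleton_iff, Set.mem_iUnion, Set.mem_inter_iff,
      Set.mem_setOf_eq]
    constructor
    · intro h
      exact ⟨N ω, rfl, by rw [← hS ω]; exact h⟩
    · rintro ⟨k, hk, hsum⟩
      rw [hS ω, hk]
      exact hsum
  rw [hset]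
  refine MeasurableSet.iUnion fun k => (hNmeas (measurableSet_singleton k)).inter ?_
  exact (Finset.measurable_sum (Finset.range k) fun i _ => hVmeas i) (measurableSet_singleton s)

end helper

theorem statement1_aux {Ω : Type*} [MeasureSpace Ω] [IsProbabilityMeasure (ℙ : Measure Ω)]
    (n : ℕ) (hn : 0 < n) (p q : ℝ) (hp : p ∈ Set.Ioc (0 : ℝ) 1) (hq : q ∈ Set.Ioc (0 : ℝ) 1)
    (N : Ω → ℕ) (V : ℕ → Ω → ℕ)
    (hNmeas : Measurable N) (hVmeas : ∀ i, Measurable (V i))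
    (hIndep : iIndepFun
      (fun o : Option ℕ => o.elim N V) ℙ)
    (hN : ∀ m : ℕ, ℙ {ω | N ω = m}
      = ENNReal.ofReal ((n.choose m : ℝ) * p ^ m * (1 - p) ^ (n - m)))
    (hV : ∀ i, ∀ m : ℕ, 1 ≤ m →
      ℙ {ω | V i ω = m} = ENNReal.ofReal (q * (1 - q) ^ (m - 1)))
    (S : Ω → ℕ) (hS : ∀ ω, S ω = ∑ i ∈ Finset.range (N ω), V i ω)
    (θ : ℝ) (hθ : 0 ≤ θ) :
    (θ ≤ n * p / q →
      ℙ {ω | (S ω : ℝ) ≤ θ}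
        ≤ ENNReal.ofReal (Real.exp (-(Real.sqrt (n * p) - Real.sqrt (θ * q)) ^ 2)))
    ∧ (n * p / q ≤ θ →
      ℙ {ω | θ ≤ (S ω : ℝ)}
        ≤ ENNReal.ofReal (Real.exp (-(Real.sqrt (θ * q) - Real.sqrt (n * p)) ^ 2))) := by
  obtain ⟨hp1, hp2⟩ := hp
  obtain ⟨hq1, hq2⟩ := hq
  have hSmeas : Measurable S := statement1_meas_S N V hNmeas hVmeas S hS
  constructor
  · -- lower tail
    intro hθle
    rcases eq_or_lt_of_le hθ with h0 | hθpos
    · -- θ = 0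
      have hsub : {ω | (S ω : ℝ) ≤ θ} ⊆ {ω | N ω = 0} ∪ {ω | V 0 ω = 0} := by
        intro ω hω
        simp only [Set.mem_setOf_eq, ← h0] at hω
        have hS0 : S ω = 0 := Nat.cast_nonpos.mp hω
        by_cases hN0 : N ω = 0
        · exact Or.inl hN0
        · right
          have hsum : ∑ i ∈ Finset.range (N ω), V i ω = 0 := by rw [← hS ω]; exact hS0
          exact Finset.sum_eq_zero_iff.mp hsum 0
            (Finset.mem_range.mpr (Nat.pos_of_ne_zero hN0))
      calc ℙ {ω | (S ω : ℝ) ≤ θ} ≤ ℙ ({ω | N ω = 0} ∪ {ω | V 0 ω = 0}) := measure_mono hsub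
        _ ≤ ℙ {ω | N ω = 0} + ℙ {ω | V 0 ω = 0} := measure_union_le _ _
        _ = ENNReal.ofReal ((1 - p) ^ n) := by
            rw [hN 0, geom_tail q hq1 hq2 (V 0) (hVmeas 0) (hV 0), add_zero]
            norm_num
        _ ≤ ENNReal.ofReal (Real.exp (-(Real.sqrt (n * p) - Real.sqrt (θ * q)) ^ 2)) := by
            apply ENNReal.ofReal_le_ofReal
            rw [← h0, zero_mul, Real.sqrt_zero, sub_zero,
              Real.sq_sqrt (by positivity : (0:ℝ) ≤ (n:ℝ) * p)]
            calc (1 - p) ^ n ≤ (Real.exp (-p)) ^ n := by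
                  apply pow_le_pow_left₀ (by linarith)
                  have := Real.add_one_le_exp (-p)
                  linarith
              _ = Real.exp ((n : ℝ) * (-p)) := (Real.exp_nat_mul _ n).symm
              _ = Real.exp (-((n:ℝ) * p)) := by ring_nf
    · -- θ > 0
      obtain ⟨u, hu0, hu1, _, hule, hbound⟩ := keyR n hn p q θ hp1 hp2 hq1 hq2 hθpos
      have hu1' : u ≤ 1 := hule hθle
      have hfmeas : Measurable (fun ω => (ENNReal.ofReal u) ^ (S ω)) :=
        measurable_from_top.comp hSmeas
      have hint := mainInt n p q hp1 hp2 hq1 hq2 N V hNmeas hVmeas hIndep hN hV S hS u hu0 hu1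
      have hεpos : 0 < u ^ θ := Real.rpow_pos_of_pos hu0 θ
      have hsub : {ω | (S ω : ℝ) ≤ θ}
          ⊆ {ω | ENNReal.ofReal (u ^ θ) ≤ (ENNReal.ofReal u) ^ (S ω)} := by
        intro ω hω
        simp only [Set.mem_setOf_eq] at hω ⊢
        have h1 : u ^ θ ≤ u ^ ((S ω : ℕ) : ℝ) :=
          Real.rpow_le_rpow_of_exponent_ge hu0 hu1' hω
        rw [Real.rpow_natCast] at h1
        calc ENNReal.ofReal (u ^ θ) ≤ ENNReal.ofReal (u ^ (S ω)) :=
              ENNReal.ofReal_le_ofReal h1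
          _ = (ENNReal.ofReal u) ^ (S ω) := ENNReal.ofReal_pow hu0.le _
      have hmar := mul_meas_ge_le_lintegral₀ (μ := ℙ) hfmeas.aemeasurable (ENNReal.ofReal (u ^ θ))
      rw [hint] at hmar
      calc ℙ {ω | (S ω : ℝ) ≤ θ}
          ≤ ℙ {ω | ENNReal.ofReal (u ^ θ) ≤ (ENNReal.ofReal u) ^ (S ω)} := measure_mono hsub
        _ ≤ ENNReal.ofReal ((1 - p + p * (q * u / (1 - (1 - q) * u))) ^ n)
              / ENNReal.ofReal (u ^ θ) := by
            rw [ENNReal.le_div_iff_mul_le (Or.inl (ENNReal.ofReal_pos.mpr hεpos).ne')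
              (Or.inl ENNReal.ofReal_ne_top), mul_comm]
            exact hmar
        _ = ENNReal.ofReal ((1 - p + p * (q * u / (1 - (1 - q) * u))) ^ n / u ^ θ) :=
            (ENNReal.ofReal_div_of_pos hεpos).symm
        _ ≤ ENNReal.ofReal (Real.exp (-(Real.sqrt (θ * q) - Real.sqrt (n * p)) ^ 2)) :=
            ENNReal.ofReal_le_ofReal hbound
        _ = ENNReal.ofReal (Real.exp (-(Real.sqrt (n * p) - Real.sqrt (θ * q)) ^ 2)) := by
            rw [show (Real.sqrt (θ * q) - Real.sqrt (n * p)) ^ 2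
              = (Real.sqrt (n * p) - Real.sqrt (θ * q)) ^ 2 from by ring]
  · -- upper tail
    intro hθge
    have hθpos : 0 < θ := lt_of_lt_of_le (by positivity) hθge
    obtain ⟨u, hu0, hu1, huge, _, hbound⟩ := keyR n hn p q θ hp1 hp2 hq1 hq2 hθpos
    have hu1' : 1 ≤ u := huge hθge
    have hfmeas : Measurable (fun ω => (ENNReal.ofReal u) ^ (S ω)) :=
      measurable_from_top.comp hSmeas
    have hint := mainInt n p q hp1 hp2 hq1 hq2 N V hNmeas hVmeas hIndep hN hV S hS u hu0 hu1
    have hεpos : 0 < u ^ θ := Real.rpow_pos_of_pos hu0 θ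
    have hsub : {ω | θ ≤ (S ω : ℝ)}
        ⊆ {ω | ENNReal.ofReal (u ^ θ) ≤ (ENNReal.ofReal u) ^ (S ω)} := by
      intro ω hω
      simp only [Set.mem_setOf_eq] at hω ⊢
      have h1 : u ^ θ ≤ u ^ ((S ω : ℕ) : ℝ) :=
        Real.rpow_le_rpow_of_exponent_le hu1' hω
      rw [Real.rpow_natCast] at h1
      calc ENNReal.ofReal (u ^ θ) ≤ ENNReal.ofReal (u ^ (S ω)) :=
            ENNReal.ofReal_le_ofReal h1
        _ = (ENNReal.ofReal u) ^ (S ω) := ENNReal.ofReal_pow hu0.le _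
    have hmar := mul_meas_ge_le_lintegral₀ (μ := ℙ) hfmeas.aemeasurable (ENNReal.ofReal (u ^ θ))
    rw [hint] at hmar
    calc ℙ {ω | θ ≤ (S ω : ℝ)}
        ≤ ℙ {ω | ENNReal.ofReal (u ^ θ) ≤ (ENNReal.ofReal u) ^ (S ω)} := measure_mono hsub
      _ ≤ ENNReal.ofReal ((1 - p + p * (q * u / (1 - (1 - q) * u))) ^ n)
            / ENNReal.ofReal (u ^ θ) := by
          rw [ENNReal.le_div_iff_mul_le (Or.inl (ENNReal.ofReal_pos.mpr hεpos).ne')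
            (Or.inl ENNReal.ofReal_ne_top), mul_comm]
          exact hmar
      _ = ENNReal.ofReal ((1 - p + p * (q * u / (1 - (1 - q) * u))) ^ n / u ^ θ) :=
          (ENNReal.ofReal_div_of_pos hεpos).symm
      _ ≤ ENNReal.ofReal (Real.exp (-(Real.sqrt (θ * q) - Real.sqrt (n * p)) ^ 2)) :=
          ENNReal.ofReal_le_ofReal hbound
/-- Tail bounds for the Binomial–Geometric compound distribution
`S = ∑_{i=1}^N Vᵢ`, where `N ~ Binomial(n,p)` and the `Vᵢ` are geometric on the positive
integers with parameter `q`, all mutually independent. -/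
theorem statement1 {Ω : Type*} [MeasureSpace Ω] [IsProbabilityMeasure (ℙ : Measure Ω)]
    (n : ℕ) (hn : 0 < n) (p q : ℝ) (hp : p ∈ Set.Ioc (0 : ℝ) 1) (hq : q ∈ Set.Ioc (0 : ℝ) 1)
    (N : Ω → ℕ) (V : ℕ → Ω → ℕ)
    (hNmeas : Measurable N) (hVmeas : ∀ i, Measurable (V i))
    (hIndep : iIndepFun
      (fun o : Option ℕ => o.elim N V) ℙ)
    (hN : ∀ m : ℕ, ℙ {ω | N ω = m}
      = ENNReal.ofReal ((n.choose m : ℝ) * p ^ m * (1 - p) ^ (n - m)))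
    (hV : ∀ i, ∀ m : ℕ, 1 ≤ m →
      ℙ {ω | V i ω = m} = ENNReal.ofReal (q * (1 - q) ^ (m - 1)))
    (S : Ω → ℕ) (hS : ∀ ω, S ω = ∑ i ∈ Finset.range (N ω), V i ω)
    (θ : ℝ) (hθ : 0 ≤ θ) :
    (θ ≤ n * p / q →
      ℙ {ω | (S ω : ℝ) ≤ θ}
        ≤ ENNReal.ofReal (Real.exp (-(Real.sqrt (n * p) - Real.sqrt (θ * q)) ^ 2)))
    ∧ (n * p / q ≤ θ →
      ℙ {ω | θ ≤ (S ω : ℝ)}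
        ≤ ENNReal.ofReal (Real.exp (-(Real.sqrt (θ * q) - Real.sqrt (n * p)) ^ 2))) := by
  exact statement1_aux n hn p q hp hq N V hNmeas hVmeas hIndep hN hV S hS θ hθ
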